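/- Let H be a complex Hilbert space, c a complex number with |c| = 1, and U a unitary operator on H. Define the operator B on H ⊕ H by B(ξ, η) = (ξ + (1/2)(U - 1)(ξ + c·η), η + (1/2)(U - 1)(c̄·ξ + η)). Then for every λ ≠ 1, λ is an eigenvalue of B if and only if λ is an eigenvalue of U; more precisely, if B(ξ,η) = λ(ξ,η) with (ξ,η) ≠ 0 and λ ≠ 1, then η = c̄·ξ, ξ ≠ 0, and Uξ = λξ; conversely if Uξ = λξ with ξ ≠ 0 then B(ξ, c̄·ξ) = λ(ξ, c̄·ξ). -/

import Mathlib

theorem stmt_0 {H : Type*} [NormedAddCommGroup H] [InnerProductSpace ℂ H] [CompleteSpace H]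
    (U : H →L[ℂ] H) (hU : U ∈ unitary (H →L[ℂ] H)) (c : ℂ) (hc : ‖c‖ = 1)
    (μ : ℂ) (hμ : μ ≠ 1)
    (B : H × H → H × H)
    (hB : ∀ ξ η : H, B (ξ, η) =
      (ξ + (1 / 2 : ℂ) • ((U ξ - ξ) + c • (U η - η)),
       η + (1 / 2 : ℂ) • ((starRingEnd ℂ) c • (U ξ - ξ) + (U η - η)))) :
    (∀ ξ η : H, (ξ, η) ≠ (0, 0) → B (ξ, η) = (μ • ξ, μ • η) →
      η = (starRingEnd ℂ) c • ξ ∧ ξ ≠ 0 ∧ U ξ = μ • ξ) ∧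
    (∀ ξ : H, ξ ≠ 0 → U ξ = μ • ξ →
      B (ξ, (starRingEnd ℂ) c • ξ) = (μ • ξ, μ • ((starRingEnd ℂ) c • ξ))) := by
  have hcc : c * (starRingEnd ℂ) c = 1 := by
    rw [Complex.mul_conj]
    norm_cast
    rw [Complex.normSq_eq_norm_sq, hc]; norm_num
  have hμ1 : μ - 1 ≠ 0 := sub_ne_zero.mpr hμ
  constructor
  · intro ξ η hne hBe
    rw [hB] at hBe
    have h1 := congrArg Prod.fst hBe
    have h2 := congrArg Prod.snd hBe
    simp only at h1 h2
    have key : η = (starRingEnd ℂ) c • ξ := by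
      have h3 : (μ - 1) • (η - (starRingEnd ℂ) c • ξ) = 0 := by
        linear_combination (norm := module) (starRingEnd ℂ) c • h1 - h2 -
          hcc • ((1 / 2 : ℂ) • (U η - η))
      rcases smul_eq_zero.mp h3 with h | h
      · exact absurd h hμ1
      · exact sub_eq_zero.mp h
    have hUξ : U ξ = μ • ξ := by
      rw [key, map_smul] at h1
      have h4 : U ξ - μ • ξ = 0 := by
        linear_combination (norm := module) h1 - hcc • ((1 / 2 : ℂ) • (U ξ - ξ))
      exact sub_eq_zero.mp h4
    have hξ : ξ ≠ 0 := by
      intro h0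
      apply hne
      rw [h0, smul_zero] at key
      simp [h0, key]
    exact ⟨key, hξ, hUξ⟩
  · intro ξ hξ hUξ
    rw [hB]
    have hUc : U ((starRingEnd ℂ) c • ξ) = (starRingEnd ℂ) c • (μ • ξ) := by
      rw [map_smul, hUξ]
    refine Prod.ext ?_ ?_ <;> simp only [hUc, hUξ]
    · linear_combination (norm := module) hcc • ((1 / 2 : ℂ) • ((μ - 1) • ξ))
    · module
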